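/- arXiv:2204.02856 — 5 statements merged into one kernel-verified Lean document; each statement's English description precedes it below -/
import Mathlib

section
/- Let α > 0 and c₀ > 0. There exists a constant c = c(α, c₀) > 0 such that for every measurable function u : ℂ → ℝ with ∫_{𝔻₁} e^{2α u²} dLeb ≤ c₀ and every compact set K ⊆ 𝔻₁ with Leb(K) > 0, one has ∫_K |u| dLeb ≤ c · Leb(K) · (1 + |log Leb(K)|)^{1/2}. -/
set_option maxHeartbeats 1000000


open MeasureTheory Metric

/-- If `∫_{𝔻₁} e^{2 α u²} ≤ c₀`, then `∫_K |u| ≤ c ⋅ Leb(K) ⋅ (log⋆ Leb(K))^{1/2}`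
for every compact `K ⊆ 𝔻₁` of positive measure, with `c` depending only on `α, c₀`. -/
theorem stmt2 (α c₀ : ℝ) (hα : 0 < α) (hc₀ : 0 < c₀) :
    ∃ c : ℝ, 0 < c ∧
      ∀ u : ℂ → ℝ, Measurable u →
        (∫⁻ z in Metric.ball (0 : ℂ) 1, ENNReal.ofReal (Real.exp (2 * α * (u z) ^ 2))
            ≤ ENNReal.ofReal c₀) →
        ∀ K : Set ℂ, IsCompact K → K ⊆ Metric.ball (0 : ℂ) 1 →
          0 < (volume K).toReal →
          ∫ z in K, |u z| ≤
            c * (volume K).toReal * (1 + |Real.log ((volume K).toReal)|) ^ ((1 : ℝ) / 2) := by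
  have hsqrtα : 0 < Real.sqrt α := Real.sqrt_pos.2 hα
  refine ⟨(1 + c₀) / Real.sqrt α, by positivity, ?_⟩
  intro u hu hint K hK hKsub hm
  set m := (volume K).toReal with hmdef
  set L := (1 + |Real.log m| : ℝ) with hLdef
  have hL1 : (1 : ℝ) ≤ L := by
    have : (0:ℝ) ≤ |Real.log m| := abs_nonneg _
    linarith
  have hL0 : (0 : ℝ) < L := lt_of_lt_of_le one_pos hL1
  set t := Real.sqrt (L / α) with htdef
  have ht0 : (0 : ℝ) ≤ t := Real.sqrt_nonneg _
  have htsq : α * t ^ 2 = L := by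
    rw [htdef, Real.sq_sqrt (div_nonneg hL0.le hα.le)]
    field_simp
  -- pointwise bound
  have key : ∀ x : ℝ, |x| ≤ t + (1 / (2 * Real.sqrt α)) * Real.exp (-(α * t ^ 2))
      * Real.exp (2 * α * x ^ 2) := by
    intro x
    rcases le_or_gt |x| t with h | h
    · have hp : (0:ℝ) ≤ (1 / (2 * Real.sqrt α)) * Real.exp (-(α * t ^ 2))
          * Real.exp (2 * α * x ^ 2) := by positivity
      linarith
    · have hx2 : t ^ 2 ≤ x ^ 2 := by
        calc t ^ 2 ≤ |x| ^ 2 := pow_le_pow_left₀ ht0 h.le 2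
        _ = x ^ 2 := sq_abs x
      have h1 : Real.exp (α * x ^ 2) ≤ Real.exp (-(α * t ^ 2)) * Real.exp (2 * α * x ^ 2) := by
        rw [← Real.exp_add]
        apply Real.exp_le_exp.2
        nlinarith
      have h2 : 2 * Real.sqrt α * |x| ≤ Real.exp (α * x ^ 2) := by
        have he := Real.add_one_le_exp (α * x ^ 2)
        nlinarith [sq_nonneg (Real.sqrt α * |x| - 1), Real.sq_sqrt hα.le, sq_abs x]
      have h4 : 2 * Real.sqrt α * |x| ≤ Real.exp (-(α * t ^ 2)) * Real.exp (2 * α * x ^ 2) :=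
        h2.trans h1
      have h5 : |x| ≤ (Real.exp (-(α * t ^ 2)) * Real.exp (2 * α * x ^ 2)) /
          (2 * Real.sqrt α) := by
        rw [le_div_iff₀ (by positivity)]
        nlinarith
      calc |x| ≤ (Real.exp (-(α * t ^ 2)) * Real.exp (2 * α * x ^ 2)) / (2 * Real.sqrt α) := h5
        _ = (1 / (2 * Real.sqrt α)) * Real.exp (-(α * t ^ 2)) * Real.exp (2 * α * x ^ 2) := by
            ring
        _ ≤ t + _ := by linarith
  have hKmeas : MeasurableSet K := hK.measurableSet
  have hexp_meas : Measurable fun z => Real.exp (2 * α * (u z) ^ 2) := by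
    exact (Real.measurable_exp).comp (by fun_prop)
  have hlint : ∫⁻ z in K, ENNReal.ofReal (Real.exp (2 * α * (u z) ^ 2)) ≤ ENNReal.ofReal c₀ :=
    le_trans (lintegral_mono_set hKsub) hint
  have hg_int : IntegrableOn (fun z => Real.exp (2 * α * (u z) ^ 2)) K := by
    refine ⟨hexp_meas.aestronglyMeasurable, ?_⟩
    rw [hasFiniteIntegral_iff_ofReal (by filter_upwards with z using (Real.exp_pos _).le)]
    exact lt_of_le_of_lt hlint ENNReal.ofReal_lt_top
  have hInt_exp : ∫ z in K, Real.exp (2 * α * (u z) ^ 2) ≤ c₀ := by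
    rw [integral_eq_lintegral_of_nonneg_ae
      (by filter_upwards with z using (Real.exp_pos _).le) hexp_meas.aestronglyMeasurable]
    exact ENNReal.toReal_le_of_le_ofReal hc₀.le hlint
  have hKfin : volume K < ⊤ := hK.measure_lt_top
  have hconst_int : IntegrableOn (fun _ : ℂ => t) K := integrableOn_const hKfin.ne
  have hG_int : IntegrableOn
      (fun z => t + (1 / (2 * Real.sqrt α)) * Real.exp (-(α * t ^ 2))
        * Real.exp (2 * α * (u z) ^ 2)) K := by
    exact hconst_int.add (hg_int.const_mul _)
  have hu_int : IntegrableOn (fun z => |u z|) K := by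
    refine Integrable.mono' hG_int (hu.abs.aestronglyMeasurable) ?_
    filter_upwards with z
    rw [Real.norm_eq_abs, abs_abs]
    exact key (u z)
  have step1 : ∫ z in K, |u z| ≤ t * m + (1 / (2 * Real.sqrt α)) * Real.exp (-(α * t ^ 2))
      * ∫ z in K, Real.exp (2 * α * (u z) ^ 2) := by
    calc ∫ z in K, |u z|
        ≤ ∫ z in K, (t + (1 / (2 * Real.sqrt α)) * Real.exp (-(α * t ^ 2))
            * Real.exp (2 * α * (u z) ^ 2)) :=
          integral_mono hu_int hG_int fun z => key (u z)
      _ = t * m + (1 / (2 * Real.sqrt α)) * Real.exp (-(α * t ^ 2))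
            * ∫ z in K, Real.exp (2 * α * (u z) ^ 2) := by
          rw [integral_add hconst_int
            (hg_int.const_mul _)]
          rw [setIntegral_const, integral_const_mul]
          simp [smul_eq_mul, mul_comm, hmdef, Measure.real]
  -- arithmetic finish
  have hem : Real.exp (-(α * t ^ 2)) ≤ m := by
    rw [htsq]
    calc Real.exp (-L) ≤ Real.exp (Real.log m) := by
          apply Real.exp_le_exp.2
          have := neg_abs_le (Real.log m)
          rw [hLdef]; linarith
      _ = m := Real.exp_log hm
  have hsL : (1 : ℝ) ≤ Real.sqrt L := Real.one_le_sqrt.2 hL1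
  have hts : t * Real.sqrt α = Real.sqrt L := by
    rw [htdef, Real.sqrt_div hL0.le, div_mul_cancel₀ _ hsqrtα.ne']
  have hrp : L ^ ((1 : ℝ) / 2) = Real.sqrt L := (Real.sqrt_eq_rpow L).symm
  have step2 : t * m + (1 / (2 * Real.sqrt α)) * Real.exp (-(α * t ^ 2)) * c₀
      ≤ (1 + c₀) / Real.sqrt α * m * Real.sqrt L := by
    have hmul : Real.sqrt α * (t * m + (1 / (2 * Real.sqrt α)) * Real.exp (-(α * t ^ 2)) * c₀)
        ≤ Real.sqrt α * ((1 + c₀) / Real.sqrt α * m * Real.sqrt L) := by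
      have e1 : Real.sqrt α * (t * m) = Real.sqrt L * m := by rw [← hts]; ring
      have e2 : Real.sqrt α * ((1 / (2 * Real.sqrt α)) * Real.exp (-(α * t ^ 2)) * c₀)
          = Real.exp (-(α * t ^ 2)) * c₀ / 2 := by field_simp
      have e3 : Real.sqrt α * ((1 + c₀) / Real.sqrt α * m * Real.sqrt L)
          = (1 + c₀) * m * Real.sqrt L := by field_simp
      rw [mul_add, e1, e2, e3]
      nlinarith [mul_le_mul_of_nonneg_right hem hc₀.le,
        mul_nonneg (mul_nonneg (sub_nonneg.2 hsL) hm.le) hc₀.le]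
    exact le_of_mul_le_mul_left hmul hsqrtα
  calc ∫ z in K, |u z| ≤ t * m + (1 / (2 * Real.sqrt α)) * Real.exp (-(α * t ^ 2))
        * ∫ z in K, Real.exp (2 * α * (u z) ^ 2) := step1
    _ ≤ t * m + (1 / (2 * Real.sqrt α)) * Real.exp (-(α * t ^ 2)) * c₀ := by
        have : (0:ℝ) ≤ (1 / (2 * Real.sqrt α)) * Real.exp (-(α * t ^ 2)) := by positivity
        nlinarith
    _ ≤ (1 + c₀) / Real.sqrt α * m * Real.sqrt L := step2
    _ = (1 + c₀) / Real.sqrt α * m * L ^ ((1 : ℝ) / 2) := by rw [hrp]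
end

section
/- Let (X, d) be a metric space, let γ > 0, q > 0, C ≥ 0, and let g : X → ℝ. Assume that for every ε ∈ (0, 1] there exist functions g₁, g₂ : X → ℝ with g = g₁ + g₂ such that sup_{x ∈ X} |g₂(x)| ≤ ε and |g₁(x) − g₁(y)| ≤ C · ε^{−1/γ} · (1 + |log d(x, y)|)^{−q} for all x ≠ y in X. Then for all x, y ∈ X with 0 < d(x, y) ≤ 1, one has |g(x) − g(y)| ≤ (C + 2) · (1 + |log d(x, y)|)^{−q·γ/(γ+1)}. -/
/-- Interpolation: if for every `ε ∈ (0,1]` the function `g` splits into a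
`log^q`-continuous part of size `C ε^{-1/γ}` and a part of sup-norm at most `ε`,
then `g` is `log^{qγ/(γ+1)}`-continuous. -/
theorem stmt7 {X : Type*} [MetricSpace X] (γ q C : ℝ) (hγ : 0 < γ) (hq : 0 < q)
    (hC : 0 ≤ C) (g : X → ℝ)
    (hdec : ∀ ε : ℝ, 0 < ε → ε ≤ 1 →
      ∃ g₁ g₂ : X → ℝ, g = g₁ + g₂ ∧ (∀ x, |g₂ x| ≤ ε) ∧
        ∀ x y : X, x ≠ y →
          |g₁ x - g₁ y| ≤ C * ε ^ (-(1 : ℝ) / γ) * (1 + |Real.log (dist x y)|) ^ (-q)) :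
    ∀ x y : X, 0 < dist x y → dist x y ≤ 1 →
      |g x - g y| ≤ (C + 2) * (1 + |Real.log (dist x y)|) ^ (-(q * γ / (γ + 1))) := by
  intro x y hd hd1
  set L : ℝ := 1 + |Real.log (dist x y)| with hLdef
  have hL1 : (1 : ℝ) ≤ L := le_add_of_nonneg_right (abs_nonneg _)
  have hL0 : (0 : ℝ) < L := lt_of_lt_of_le one_pos hL1
  set a : ℝ := -(q * γ / (γ + 1)) with hadef
  have ha0 : a ≤ 0 := by
    have : 0 ≤ q * γ / (γ + 1) := by positivity
    simpa [hadef] using neg_nonpos.mpr this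
  set ε : ℝ := L ^ a with hεdef
  have hε0 : 0 < ε := Real.rpow_pos_of_pos hL0 a
  have hε1 : ε ≤ 1 := Real.rpow_le_one_of_one_le_of_nonpos hL1 ha0
  obtain ⟨g₁, g₂, hg, hg₂, hg₁⟩ := hdec ε hε0 hε1
  have hxy : x ≠ y := by
    intro h; rw [h, dist_self] at hd; exact lt_irrefl 0 hd
  have key : ε ^ (-(1:ℝ)/γ) * L ^ (-q) = L ^ a := by
    rw [hεdef, ← Real.rpow_mul hL0.le, ← Real.rpow_add hL0]
    congr 1
    field_simp [hadef]
    have h' : a * (γ + 1) = -(q * γ) := by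
      rw [hadef, neg_mul, div_mul_cancel₀ _ (by linarith : γ + 1 ≠ 0)]
    linarith
  have h1 := hg₁ x y hxy
  have hbound : |g x - g y| ≤ C * (ε ^ (-(1:ℝ)/γ) * L ^ (-q)) + 2 * ε := by
    have : g x - g y = (g₁ x - g₁ y) + (g₂ x - g₂ y) := by
      simp [hg]; ring
    rw [this]
    calc |(g₁ x - g₁ y) + (g₂ x - g₂ y)| ≤ |g₁ x - g₁ y| + |g₂ x - g₂ y| := abs_add_le _ _
      _ ≤ C * ε ^ (-(1:ℝ)/γ) * L ^ (-q) + (|g₂ x| + |g₂ y|) :=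
          add_le_add h1 ((abs_sub _ _).trans_eq rfl)
      _ ≤ C * (ε ^ (-(1:ℝ)/γ) * L ^ (-q)) + 2 * ε := by
          rw [← mul_assoc]
          have := add_le_add (hg₂ x) (hg₂ y)
          linarith
  calc |g x - g y| ≤ C * (ε ^ (-(1:ℝ)/γ) * L ^ (-q)) + 2 * ε := hbound
    _ = (C + 2) * L ^ a := by rw [key, hεdef]; ring
end

section
/- Let X be a set, let N be a function assigning to every bounded function w : X → ℝ a value N(w) ∈ [0, ∞], and let γ > 0. Define the interpolated functional N_γ(g) := inf{ c ≥ 0 : for every ε ∈ (0,1] there exist g₁, g₂ : X → ℝ with g = g₁ + g₂, N(g₁) ≤ c·ε^{−1/γ} and sup_X |g₂| ≤ c·ε } (with N_γ(g) := ∞ if no such c exists). Assume N is absolutely homogeneous (N(t·w) = |t|·N(w) for all t ∈ ℝ and all w) and satisfies N(w·h) ≤ √2·( N(w)·sup_X|h| + sup_X|w|·N(h) ) for all bounded w, h : X → ℝ. Then for all bounded functions g, h : X → ℝ with 0 < N_γ(g) < ∞ and 0 < N_γ(h) < ∞, one has N_γ(g·h) ≤ 3·( N_γ(g)·sup_X|h|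 + sup_X|g|·N_γ(h) ). -/
open scoped ENNReal

/-- The interpolated functional `N_γ` associated to a functional `N` on functions:
`N_γ(g)` is the infimum of the constants `c` such that, for every `ε ∈ (0,1]`,
`g` splits as `g₁ + g₂` with `N(g₁) ≤ c ε^{-1/γ}` and `sup|g₂| ≤ c ε`. -/
noncomputable def interpNorm {X : Type*} (N : (X → ℝ) → ℝ≥0∞) (γ : ℝ) (g : X → ℝ) :
    ℝ≥0∞ :=
  sInf {c : ℝ≥0∞ | ∀ ε : ℝ, 0 < ε → ε ≤ 1 →
    ∃ g₁ g₂ : X → ℝ, g = g₁ + g₂ ∧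
      N g₁ ≤ c * ENNReal.ofReal (ε ^ (-(1 : ℝ) / γ)) ∧
      ∀ x, ENNReal.ofReal |g₂ x| ≤ c * ENNReal.ofReal ε}

/-- A Leibniz-type inequality for `N` (with constant `√2`) implies a Leibniz-type
inequality for the interpolated functional `N_γ` (with constant `3`). -/
theorem stmt9 {X : Type*} (N : (X → ℝ) → ℝ≥0∞) (γ : ℝ) (hγ : 0 < γ)
    (hhom : ∀ (t : ℝ) (w : X → ℝ), (∃ M : ℝ, ∀ x, |w x| ≤ M) →
      N (fun x => t * w x) = ENNReal.ofReal |t| * N w)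
    (hprod : ∀ w h : X → ℝ, (∃ M : ℝ, ∀ x, |w x| ≤ M) → (∃ M : ℝ, ∀ x, |h x| ≤ M) →
      N (fun x => w x * h x) ≤
        ENNReal.ofReal (Real.sqrt 2) *
          (N w * (⨆ x, ENNReal.ofReal |h x|) + (⨆ x, ENNReal.ofReal |w x|) * N h))
    (g h : X → ℝ) (hg : ∃ M : ℝ, ∀ x, |g x| ≤ M) (hh : ∃ M : ℝ, ∀ x, |h x| ≤ M)
    (hg0 : 0 < interpNorm N γ g) (hg1 : interpNorm N γ g < ⊤)
    (hh0 : 0 < interpNorm N γ h) (hh1 : interpNorm N γ h < ⊤) :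
    interpNorm N γ (fun x => g x * h x) ≤
      3 * (interpNorm N γ g * (⨆ x, ENNReal.ofReal |h x|)
        + (⨆ x, ENNReal.ofReal |g x|) * interpNorm N γ h) := by
  classical
  obtain ⟨Mg, hMg⟩ := hg
  obtain ⟨Mh, hMh⟩ := hh
  have N0 : N (fun _ : X => (0 : ℝ)) = 0 := by
    have h0 := hhom 0 (fun _ => 0) ⟨0, fun x => by simp⟩
    simpa using h0
  set S := ⨆ x, ENNReal.ofReal |h x| with hSdef
  set T := ⨆ x, ENNReal.ofReal |g x| with hTdef
  have hSle : ∀ x, ENNReal.ofReal |h x| ≤ S := fun x => le_iSup (fun x => ENNReal.ofReal |h x|) x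
  have hTle : ∀ x, ENNReal.ofReal |g x| ≤ T := fun x => le_iSup (fun x => ENNReal.ofReal |g x|) x
  clear_value S T
  have hsqrt : ENNReal.ofReal (Real.sqrt 2) * 2 ≤ 3 := by
    rw [show (2 : ℝ≥0∞) = ENNReal.ofReal 2 by simp, show (3 : ℝ≥0∞) = ENNReal.ofReal 3 by simp,
      ← ENNReal.ofReal_mul (Real.sqrt_nonneg _)]
    apply ENNReal.ofReal_le_ofReal
    nlinarith [Real.sq_sqrt (show (0:ℝ) ≤ 2 by norm_num), Real.sqrt_nonneg 2]
  -- Main estimate, for concrete constants c, d witnessing the splittings.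
  have main : ∀ c d : ℝ≥0∞, c ≠ ⊤ → d ≠ ⊤ →
      (∀ ε : ℝ, 0 < ε → ε ≤ 1 → ∃ g₁ g₂ : X → ℝ, g = g₁ + g₂ ∧
        N g₁ ≤ c * ENNReal.ofReal (ε ^ (-(1 : ℝ) / γ)) ∧
        ∀ x, ENNReal.ofReal |g₂ x| ≤ c * ENNReal.ofReal ε) →
      (∀ ε : ℝ, 0 < ε → ε ≤ 1 → ∃ h₁ h₂ : X → ℝ, h = h₁ + h₂ ∧
        N h₁ ≤ d * ENNReal.ofReal (ε ^ (-(1 : ℝ) / γ)) ∧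
        ∀ x, ENNReal.ofReal |h₂ x| ≤ d * ENNReal.ofReal ε) →
      interpNorm N γ (fun x => g x * h x) ≤ 3 * (c * S + T * d) := by
    intro c d hcT hdT hcmem hdmem
    rw [interpNorm]
    apply sInf_le
    intro ε hε hε1
    set Eε := ENNReal.ofReal ε with hEεdef
    set E' := ENNReal.ofReal (ε ^ (-(1 : ℝ) / γ)) with hE'def
    have hEεT : Eε ≠ ⊤ := ENNReal.ofReal_ne_top
    clear_value Eε E'
    have hEε1 : Eε ≤ 1 := by
      rw [hEεdef, show (1 : ℝ≥0∞) = ENNReal.ofReal 1 by simp]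
      exact ENNReal.ofReal_le_ofReal hε1
    by_cases hcase : 2 * (c * d * Eε) ≤ c * S + T * d
    · -- split each factor at scale ε and multiply
      obtain ⟨g₁, g₂, hgsplit, hg₁N, hg₂⟩ := hcmem ε hε hε1
      obtain ⟨h₁, h₂, hhsplit, hh₁N, hh₂⟩ := hdmem ε hε hε1
      simp only [← hEεdef, ← hE'def] at hg₁N hg₂ hh₁N hh₂
      have hcET : c * Eε ≠ ⊤ := ENNReal.mul_ne_top hcT hEεT
      have hdET : d * Eε ≠ ⊤ := ENNReal.mul_ne_top hdT hEεT
      have hg2b : ∀ x, |g₂ x| ≤ (c * Eε).toReal := fun x =>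
        (ENNReal.ofReal_le_iff_le_toReal hcET).mp (hg₂ x)
      have hh2b : ∀ x, |h₂ x| ≤ (d * Eε).toReal := fun x =>
        (ENNReal.ofReal_le_iff_le_toReal hdET).mp (hh₂ x)
      have hgx : ∀ x, g₁ x = g x - g₂ x := fun x => by
        have := congrFun hgsplit x; simp only [Pi.add_apply] at this; linarith
      have hhx : ∀ x, h₁ x = h x - h₂ x := fun x => by
        have := congrFun hhsplit x; simp only [Pi.add_apply] at this; linarith
      have hg1b : ∀ x, |g₁ x| ≤ Mg + (c * Eε).toReal := fun x => by
        rw [hgx x]; exact (abs_sub _ _).trans (add_le_add (hMg x) (hg2b x))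
      have hh1b : ∀ x, |h₁ x| ≤ Mh + (d * Eε).toReal := fun x => by
        rw [hhx x]; exact (abs_sub _ _).trans (add_le_add (hMh x) (hh2b x))
      have hS1 : (⨆ x, ENNReal.ofReal |h₁ x|) ≤ S + d * Eε := by
        apply iSup_le; intro x
        calc ENNReal.ofReal |h₁ x| ≤ ENNReal.ofReal (|h x| + |h₂ x|) := by
              apply ENNReal.ofReal_le_ofReal; rw [hhx x]; exact abs_sub _ _
          _ = ENNReal.ofReal |h x| + ENNReal.ofReal |h₂ x| :=
              ENNReal.ofReal_add (abs_nonneg _) (abs_nonneg _)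
          _ ≤ S + d * Eε := add_le_add (hSle x) (hh₂ x)
      have hT1 : (⨆ x, ENNReal.ofReal |g₁ x|) ≤ T + c * Eε := by
        apply iSup_le; intro x
        calc ENNReal.ofReal |g₁ x| ≤ ENNReal.ofReal (|g x| + |g₂ x|) := by
              apply ENNReal.ofReal_le_ofReal; rw [hgx x]; exact abs_sub _ _
          _ = ENNReal.ofReal |g x| + ENNReal.ofReal |g₂ x| :=
              ENNReal.ofReal_add (abs_nonneg _) (abs_nonneg _)
          _ ≤ T + c * Eε := add_le_add (hTle x) (hg₂ x)
      refine ⟨fun x => g₁ x * h₁ x, fun x => g₁ x * h₂ x + g₂ x * h x, ?_, ?_, ?_⟩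
      · funext x
        have e1 := congrFun hgsplit x
        have e2 := congrFun hhsplit x
        simp only [Pi.add_apply] at e1 e2 ⊢
        rw [e1, e2]; ring
      · calc N (fun x => g₁ x * h₁ x)
            ≤ ENNReal.ofReal (Real.sqrt 2) *
                (N g₁ * (⨆ x, ENNReal.ofReal |h₁ x|) + (⨆ x, ENNReal.ofReal |g₁ x|) * N h₁) :=
              hprod g₁ h₁ ⟨Mg + (c * Eε).toReal, hg1b⟩ ⟨Mh + (d * Eε).toReal, hh1b⟩
          _ ≤ ENNReal.ofReal (Real.sqrt 2) *
                ((c * E') * (S + d * Eε) + (T + c * Eε) * (d * E')) := by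
              gcongr
              all_goals first | exact hg₁N | exact hS1 | exact hT1 | exact hh₁N
          _ = (ENNReal.ofReal (Real.sqrt 2) * ((c * S + T * d) + 2 * (c * d * Eε))) * E' := by
              ring
          _ ≤ (ENNReal.ofReal (Real.sqrt 2) * ((c * S + T * d) + (c * S + T * d))) * E' := by
              gcongr
          _ = (ENNReal.ofReal (Real.sqrt 2) * 2) * ((c * S + T * d) * E') := by ring
          _ ≤ 3 * ((c * S + T * d) * E') := mul_le_mul_left hsqrt _
          _ = 3 * (c * S + T * d) * E' := by ring
      · intro x
        have habs : ENNReal.ofReal |g₁ x * h₂ x + g₂ x * h x| ≤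
            ENNReal.ofReal |g₁ x| * ENNReal.ofReal |h₂ x| +
              ENNReal.ofReal |g₂ x| * ENNReal.ofReal |h x| := by
          calc ENNReal.ofReal |g₁ x * h₂ x + g₂ x * h x|
              ≤ ENNReal.ofReal (|g₁ x| * |h₂ x| + |g₂ x| * |h x|) := by
                apply ENNReal.ofReal_le_ofReal
                calc |g₁ x * h₂ x + g₂ x * h x| ≤ |g₁ x * h₂ x| + |g₂ x * h x| := abs_add_le _ _
                  _ = |g₁ x| * |h₂ x| + |g₂ x| * |h x| := by rw [abs_mul, abs_mul]
            _ = ENNReal.ofReal (|g₁ x| * |h₂ x|) + ENNReal.ofReal (|g₂ x| * |h x|) :=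
                ENNReal.ofReal_add (by positivity) (by positivity)
            _ = ENNReal.ofReal |g₁ x| * ENNReal.ofReal |h₂ x| +
                ENNReal.ofReal |g₂ x| * ENNReal.ofReal |h x| := by
                rw [ENNReal.ofReal_mul (abs_nonneg _), ENNReal.ofReal_mul (abs_nonneg _)]
        have hcd : c * d * Eε ≤ c * S + T * d :=
          le_trans (le_mul_of_one_le_left zero_le one_le_two) hcase
        calc ENNReal.ofReal |g₁ x * h₂ x + g₂ x * h x|
            ≤ ENNReal.ofReal |g₁ x| * ENNReal.ofReal |h₂ x| +
                ENNReal.ofReal |g₂ x| * ENNReal.ofReal |h x| := habs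
          _ ≤ (T + c * Eε) * (d * Eε) + (c * Eε) * S := by
              gcongr
              all_goals first
                | exact le_trans (le_iSup (fun x => ENNReal.ofReal |g₁ x|) x) hT1
                | exact hh₂ x | exact hg₂ x | exact hSle x
          _ = ((c * S + T * d) + c * d * Eε) * Eε := by ring
          _ ≤ ((c * S + T * d) + (c * S + T * d)) * Eε := by gcongr
          _ = 2 * (c * S + T * d) * Eε := by ring
          _ ≤ 3 * (c * S + T * d) * Eε := by gcongr <;> norm_num
    · -- trivial splitting: the whole product is small in sup norm
      push_neg at hcase
      have hc0 : c ≠ 0 := by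
        rintro rfl
        simp at hcase
      have hd0 : d ≠ 0 := by
        rintro rfl
        simp at hcase
      have hScase : S ≤ 2 * (d * Eε) := by
        have h1 : c * S < c * (2 * (d * Eε)) := by
          calc c * S ≤ c * S + T * d := le_self_add
            _ < 2 * (c * d * Eε) := hcase
            _ = c * (2 * (d * Eε)) := by ring
        exact ((ENNReal.mul_lt_mul_iff_right hc0 hcT).mp h1).le
      refine ⟨fun _ => 0, fun x => g x * h x, ?_, ?_, ?_⟩
      · funext x; simp
      · rw [N0]; exact zero_le
      · intro x
        calc ENNReal.ofReal |g x * h x|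
            = ENNReal.ofReal |g x| * ENNReal.ofReal |h x| := by
              rw [abs_mul, ENNReal.ofReal_mul (abs_nonneg _)]
          _ ≤ T * S := mul_le_mul' (hTle x) (hSle x)
          _ ≤ T * (2 * (d * Eε)) := mul_le_mul_right hScase T
          _ = 2 * (T * d) * Eε := by ring
          _ ≤ 2 * (c * S + T * d) * Eε := by gcongr; exact le_add_self
          _ ≤ 3 * (c * S + T * d) * Eε := by gcongr <;> norm_num
  -- From the infimum being < c, extract a membership statement for c.
  have hgset : ∀ c : ℝ≥0∞, interpNorm N γ g < c →
      (∀ ε : ℝ, 0 < ε → ε ≤ 1 → ∃ g₁ g₂ : X → ℝ, g = g₁ + g₂ ∧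
        N g₁ ≤ c * ENNReal.ofReal (ε ^ (-(1 : ℝ) / γ)) ∧
        ∀ x, ENNReal.ofReal |g₂ x| ≤ c * ENNReal.ofReal ε) := by
    intro c hc
    rw [interpNorm] at hc
    obtain ⟨c₀, hc₀mem, hc₀lt⟩ := sInf_lt_iff.mp hc
    intro ε hε hε1
    obtain ⟨g₁, g₂, hsp, hN, hb⟩ := hc₀mem ε hε hε1
    exact ⟨g₁, g₂, hsp, hN.trans (mul_le_mul_left hc₀lt.le _),
      fun x => (hb x).trans (mul_le_mul_left hc₀lt.le _)⟩
  have hhset : ∀ d : ℝ≥0∞, interpNorm N γ h < d →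
      (∀ ε : ℝ, 0 < ε → ε ≤ 1 → ∃ h₁ h₂ : X → ℝ, h = h₁ + h₂ ∧
        N h₁ ≤ d * ENNReal.ofReal (ε ^ (-(1 : ℝ) / γ)) ∧
        ∀ x, ENNReal.ofReal |h₂ x| ≤ d * ENNReal.ofReal ε) := by
    intro d hd
    rw [interpNorm] at hd
    obtain ⟨d₀, hd₀mem, hd₀lt⟩ := sInf_lt_iff.mp hd
    intro ε hε hε1
    obtain ⟨h₁, h₂, hsp, hN, hb⟩ := hd₀mem ε hε hε1
    exact ⟨h₁, h₂, hsp, hN.trans (mul_le_mul_left hd₀lt.le _),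
      fun x => (hb x).trans (mul_le_mul_left hd₀lt.le _)⟩
  set A := interpNorm N γ g with hAdef
  set B := interpNorm N γ h with hBdef
  have key : ∀ r : ℝ≥0∞, 1 < r → r ≠ ⊤ →
      interpNorm N γ (fun x => g x * h x) ≤ r * (3 * (A * S + T * B)) := by
    intro r hr hrT
    have hAc : A < r * A := by
      conv_lhs => rw [← one_mul A]
      exact (ENNReal.mul_lt_mul_iff_left hg0.ne' hg1.ne).mpr hr
    have hBd : B < r * B := by
      conv_lhs => rw [← one_mul B]
      exact (ENNReal.mul_lt_mul_iff_left hh0.ne' hh1.ne).mpr hr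
    calc interpNorm N γ (fun x => g x * h x)
        ≤ 3 * ((r * A) * S + T * (r * B)) :=
          main (r * A) (r * B) (ENNReal.mul_ne_top hrT hg1.ne) (ENNReal.mul_ne_top hrT hh1.ne)
            (hgset _ hAc) (hhset _ hBd)
      _ = r * (3 * (A * S + T * B)) := by ring
  apply ENNReal.le_of_forall_pos_le_add
  intro δ hδ hRtop
  rcases eq_or_ne (3 * (A * S + T * B)) 0 with hR0 | hR0
  · have h2 := key 2 (by norm_num) (by norm_num)
    rw [hR0, mul_zero] at h2
    exact h2.trans (by simp)
  · have hRT : 3 * (A * S + T * B) ≠ ⊤ := hRtop.ne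
    have hδ0 : (δ : ℝ≥0∞) ≠ 0 := ENNReal.coe_ne_zero.mpr hδ.ne'
    set r := 1 + (δ : ℝ≥0∞) / (3 * (A * S + T * B)) with hrdef
    have hr1 : 1 < r := ENNReal.lt_add_right ENNReal.one_ne_top
      (ENNReal.div_ne_zero.mpr ⟨hδ0, hRT⟩)
    have hrT : r ≠ ⊤ := by
      rw [hrdef]
      exact ENNReal.add_ne_top.mpr ⟨ENNReal.one_ne_top, (ENNReal.div_lt_top ENNReal.coe_ne_top hR0).ne⟩
    calc interpNorm N γ (fun x => g x * h x) ≤ r * (3 * (A * S + T * B)) := key r hr1 hrT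
      _ = 3 * (A * S + T * B) + ((δ : ℝ≥0∞) / (3 * (A * S + T * B))) * (3 * (A * S + T * B)) := by
          rw [hrdef]; ring
      _ = 3 * (A * S + T * B) + δ := by rw [ENNReal.div_mul_cancel hR0 hRT]
end

section
/- Let m ≥ 1 be an integer and let p > 0, d > 1, A > 1, c₀ > 0, c_A > 0 be real numbers, and let η be a real number with η > (A/d)^{p/(p+1)}. Then there exists a constant C > 0, depending only on m, p, d, A, η, c₀, c_A, with the following property: for every integer n ≥ 0 and every continuous function g : B(0,2) → ℝ on the open Euclidean ball B(0,2) ⊂ ℝᵐ satisfying ∫_{B(0,2)} e^{dⁿ·|g|} dLeb ≤ c₀ and |g(x) − g(y)| ≤ c_A^p · A^{p n} · (1 + |log |x − y||)^{−p} for all x ≠ y in B(0,2), one has |g(x)| ≤ C·ηⁿ for every x in the closed ball of radius 1. -/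
open MeasureTheory Metric

/-- Exponential sup-norm bound: if `∫_{B(0,2)} e^{dⁿ|g|} ≤ c₀` and `g` has
`log^p`-oscillation at most `c_A^p A^{pn}`, then `|g| ≤ C ηⁿ` on the closed unit ball,
for every `η > (A/d)^{p/(p+1)}`, with `C` independent of `n` and `g`. -/
theorem stmt10 (m : ℕ) (hm : 1 ≤ m) (p d A c₀ cA η : ℝ)
    (hp : 0 < p) (hd : 1 < d) (hA : 1 < A) (hc₀ : 0 < c₀) (hcA : 0 < cA)
    (hη : (A / d) ^ (p / (p + 1)) < η) :
    ∃ C : ℝ, 0 < C ∧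
      ∀ (n : ℕ) (g : EuclideanSpace ℝ (Fin m) → ℝ),
        ContinuousOn g (Metric.ball 0 2) →
        (∫⁻ x in Metric.ball (0 : EuclideanSpace ℝ (Fin m)) 2,
            ENNReal.ofReal (Real.exp (d ^ n * |g x|)) ≤ ENNReal.ofReal c₀) →
        (∀ x ∈ Metric.ball (0 : EuclideanSpace ℝ (Fin m)) 2,
          ∀ y ∈ Metric.ball (0 : EuclideanSpace ℝ (Fin m)) 2, x ≠ y →
            |g x - g y| ≤ cA ^ p * A ^ (p * n) * (1 + |Real.log ‖x - y‖|) ^ (-p)) →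
        ∀ x ∈ Metric.closedBall (0 : EuclideanSpace ℝ (Fin m)) 1, |g x| ≤ C * η ^ n := by
  haveI : Nonempty (Fin m) := ⟨⟨0, hm⟩⟩
  haveI : Nontrivial (EuclideanSpace ℝ (Fin m)) := inferInstance
  have hp1 : (0:ℝ) < p + 1 := by linarith
  set θ : ℝ := p / (p + 1) with hθdef
  have hθ0 : 0 < θ := div_pos hp hp1
  have hθ1 : θ < 1 := (div_lt_one hp1).2 (by linarith)
  have hd0 : (0:ℝ) < d := by linarith
  have hA0 : (0:ℝ) < A := by linarith
  have hAd : 0 < A / d := div_pos hA0 hd0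
  set β : ℝ := (A / d) ^ θ with hβdef
  have hβ0 : 0 < β := Real.rpow_pos_of_pos hAd θ
  have hβη : β < η := hη
  have hη0 : 0 < η := hβ0.trans hβη
  have hdβ : 1 / d ≤ β := by
    rcases le_or_gt 1 (A / d) with h | h
    · have h1 : (1:ℝ) ≤ β := Real.one_le_rpow h hθ0.le
      have h2 : 1 / d ≤ 1 := by rw [div_le_one hd0]; linarith
      linarith
    · have h1 : (A/d) ^ (1:ℝ) ≤ (A/d) ^ θ :=
        Real.rpow_le_rpow_of_exponent_ge hAd h.le hθ1.le
      rw [Real.rpow_one] at h1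
      have h2 : 1 / d ≤ A / d := by
        apply div_le_div_of_nonneg_right (by linarith) hd0.le
      linarith
  have hηd : 1 ≤ η * d := by
    rw [div_le_iff₀ hd0] at hdβ
    nlinarith
  set c₁ : ℝ := cA ^ θ with hc₁def
  have hc₁0 : 0 < c₁ := Real.rpow_pos_of_pos hcA θ
  set ω : ℝ := (volume (ball (0 : EuclideanSpace ℝ (Fin m)) 1)).toReal with hωdef
  have hω0 : 0 < ω :=
    ENNReal.toReal_pos (measure_ball_pos volume 0 one_pos).ne' measure_ball_lt_top.ne
  refine ⟨(1 + m) * c₁ + |Real.log c₀ - Real.log ω| + 1, by positivity, ?_⟩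
  intro n g hg hint hosc x hx
  set D : ℝ := d ^ n with hDdef
  have hD0 : 0 < D := by positivity
  set L : ℝ := c₁ * (β * d) ^ n with hLdef
  have hL0 : 0 < L := by positivity
  have hLD : L = c₁ * β ^ n * D := by rw [hLdef, hDdef, mul_pow]; ring
  set r : ℝ := Real.exp (-L) with hrdef
  have hr0 : 0 < r := Real.exp_pos _
  have hr1 : r ≤ 1 := Real.exp_le_one_iff.2 (by linarith)
  set t : ℝ := |g x| with htdef
  have hx2 : x ∈ ball (0 : EuclideanSpace ℝ (Fin m)) 2 := by
    rw [mem_closedBall] at hx; rw [mem_ball]; linarith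
  have hsub : ball x r ⊆ ball (0 : EuclideanSpace ℝ (Fin m)) 2 := by
    intro y hy
    rw [mem_ball] at hy ⊢
    rw [mem_closedBall] at hx
    have := dist_triangle y x 0
    linarith
  -- key identity
  have key2 : cA ^ p * A ^ (p * (n:ℝ)) * L ^ (-p) = c₁ * β ^ n := by
    have hlogβ : Real.log β = θ * (Real.log A - Real.log d) := by
      rw [hβdef, Real.log_rpow hAd, Real.log_div hA0.ne' hd0.ne']
    have hlogL : Real.log L = θ * Real.log cA + (n:ℝ) * (Real.log β + Real.log d) := by
      rw [hLdef, Real.log_mul hc₁0.ne' (by positivity), hc₁def, Real.log_rpow hcA,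
        Real.log_pow, Real.log_mul hβ0.ne' hd0.ne']
    have hlogRHS : Real.log (c₁ * β ^ n) =
        θ * Real.log cA + (n:ℝ) * (θ * (Real.log A - Real.log d)) := by
      rw [Real.log_mul hc₁0.ne' (by positivity), hc₁def, Real.log_rpow hcA,
        Real.log_pow, hlogβ]
    have hlogLHS : Real.log (cA ^ p * A ^ (p * (n:ℝ)) * L ^ (-p)) =
        p * Real.log cA + p * (n:ℝ) * Real.log A +
          (-p) * (θ * Real.log cA + (n:ℝ) * (θ * (Real.log A - Real.log d) + Real.log d)) := by
      rw [Real.log_mul (by positivity) (by positivity),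
        Real.log_mul (by positivity) (by positivity),
        Real.log_rpow hcA, Real.log_rpow hA0, Real.log_rpow hL0, hlogL, hlogβ]
    have hlogs : Real.log (cA ^ p * A ^ (p * (n:ℝ)) * L ^ (-p)) = Real.log (c₁ * β ^ n) := by
      rw [hlogLHS, hlogRHS, hθdef]
      field_simp
      ring
    have h1 : (0:ℝ) < cA ^ p * A ^ (p * (n:ℝ)) * L ^ (-p) := by positivity
    have h2 : (0:ℝ) < c₁ * β ^ n := by positivity
    calc cA ^ p * A ^ (p * (n:ℝ)) * L ^ (-p)
        = Real.exp (Real.log (cA ^ p * A ^ (p * (n:ℝ)) * L ^ (-p))) := (Real.exp_log h1).symm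
      _ = Real.exp (Real.log (c₁ * β ^ n)) := by rw [hlogs]
      _ = c₁ * β ^ n := Real.exp_log h2
  -- pointwise lower bound on the ball
  have hstep : ∀ y ∈ ball x r,
      Real.exp (D * (t - c₁ * β ^ n)) ≤ Real.exp (d ^ n * |g y|) := by
    intro y hy
    rw [← hDdef]
    apply Real.exp_le_exp.2
    apply mul_le_mul_of_nonneg_left _ hD0.le
    have hsuff : t - |g y| ≤ c₁ * β ^ n := by
      rcases eq_or_ne x y with rfl | hxy
      · have : (0:ℝ) ≤ c₁ * β ^ n := by positivity
        simp [htdef]; linarith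
      · have h1 : t - |g y| ≤ |g x - g y| := abs_sub_abs_le_abs_sub _ _
        have h2 := hosc x hx2 y (hsub hy) hxy
        have hs0 : 0 < ‖x - y‖ := by
          rw [norm_pos_iff, sub_ne_zero]; exact hxy
        have hsr : ‖x - y‖ < r := by
          rw [mem_ball, dist_comm, dist_eq_norm] at hy; exact hy
        have hlogs : Real.log ‖x - y‖ < -L := by
          calc Real.log ‖x - y‖ < Real.log r := Real.log_lt_log hs0 hsr
            _ = -L := by rw [hrdef, Real.log_exp]
        have habs : L ≤ 1 + |Real.log ‖x - y‖| := by
          have : L ≤ -Real.log ‖x - y‖ := by linarith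
          have h3 := neg_le_abs (Real.log ‖x - y‖)
          linarith
        have h3 : (1 + |Real.log ‖x - y‖|) ^ (-p) ≤ L ^ (-p) := by
          rw [Real.rpow_neg (by positivity), Real.rpow_neg hL0.le]
          apply inv_anti₀ (Real.rpow_pos_of_pos hL0 p)
          exact Real.rpow_le_rpow hL0.le habs hp.le
        have h4 : cA ^ p * A ^ (p * (n:ℝ)) * (1 + |Real.log ‖x - y‖|) ^ (-p)
            ≤ cA ^ p * A ^ (p * (n:ℝ)) * L ^ (-p) := by
          apply mul_le_mul_of_nonneg_left h3 (by positivity)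
        calc t - |g y| ≤ |g x - g y| := h1
          _ ≤ cA ^ p * A ^ (p * (n:ℝ)) * (1 + |Real.log ‖x - y‖|) ^ (-p) := h2
          _ ≤ cA ^ p * A ^ (p * (n:ℝ)) * L ^ (-p) := h4
          _ = c₁ * β ^ n := key2
    linarith
  -- measure chain
  have hchain : ENNReal.ofReal (Real.exp (D * (t - c₁ * β ^ n))) * volume (ball x r)
      ≤ ENNReal.ofReal c₀ := by
    calc ENNReal.ofReal (Real.exp (D * (t - c₁ * β ^ n))) * volume (ball x r)
        = ∫⁻ _ in ball x r, ENNReal.ofReal (Real.exp (D * (t - c₁ * β ^ n))) :=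
          (setLIntegral_const _ _).symm
      _ ≤ ∫⁻ y in ball x r, ENNReal.ofReal (Real.exp (d ^ n * |g y|)) :=
          setLIntegral_mono' measurableSet_ball
            (fun y hy => ENNReal.ofReal_le_ofReal (hstep y hy))
      _ ≤ ∫⁻ y in ball (0 : EuclideanSpace ℝ (Fin m)) 2,
            ENNReal.ofReal (Real.exp (d ^ n * |g y|)) := lintegral_mono_set hsub
      _ ≤ ENNReal.ofReal c₀ := hint
  have hV : volume (ball x r) = ENNReal.ofReal (r ^ m) * volume (ball (0 : EuclideanSpace ℝ (Fin m)) 1) := by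
    rw [Measure.addHaar_ball volume x hr0.le, finrank_euclideanSpace_fin]
  have hreal : Real.exp (D * (t - c₁ * β ^ n)) * (r ^ m * ω) ≤ c₀ := by
    have h1 := ENNReal.toReal_mono (by simp) hchain
    rwa [ENNReal.toReal_mul, ENNReal.toReal_ofReal (Real.exp_nonneg _), hV, ENNReal.toReal_mul,
      ENNReal.toReal_ofReal (by positivity), ENNReal.toReal_ofReal hc₀.le, ← hωdef] at h1
  have hvpos : (0:ℝ) < r ^ m * ω := by positivity
  have hle : Real.exp (D * (t - c₁ * β ^ n)) ≤ c₀ / (r ^ m * ω) :=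
    (le_div_iff₀ hvpos).2 hreal
  have hlog : D * (t - c₁ * β ^ n) ≤ Real.log (c₀ / (r ^ m * ω)) :=
    (Real.le_log_iff_exp_le (by positivity)).2 hle
  rw [Real.log_div hc₀.ne' hvpos.ne', Real.log_mul (by positivity) hω0.ne',
    Real.log_pow, hrdef, Real.log_exp] at hlog
  -- final arithmetic
  have hβηn : β ^ n ≤ η ^ n := pow_le_pow_left₀ hβ0.le hβη.le n
  have hone : 1 ≤ η ^ n * D := by
    rw [hDdef, ← mul_pow]
    exact one_le_pow₀ hηd
  have habs1 : Real.log c₀ - Real.log ω ≤ |Real.log c₀ - Real.log ω| := le_abs_self _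
  have habs0 : (0:ℝ) ≤ |Real.log c₀ - Real.log ω| := abs_nonneg _
  have hηn0 : (0:ℝ) < η ^ n := by positivity
  have hfin : t * D ≤ (((1 + m) * c₁ + |Real.log c₀ - Real.log ω| + 1) * η ^ n) * D := by
    rw [hLD] at hlog
    have e1 : (1 + (m:ℝ)) * c₁ * (β ^ n * D) ≤ (1 + (m:ℝ)) * c₁ * (η ^ n * D) :=
      mul_le_mul_of_nonneg_left (mul_le_mul_of_nonneg_right hβηn hD0.le)
        (by positivity)
    have e2 : |Real.log c₀ - Real.log ω| * 1 ≤ |Real.log c₀ - Real.log ω| * (η ^ n * D) :=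
      mul_le_mul_of_nonneg_left hone habs0
    have e3 : (0:ℝ) < η ^ n * D := by positivity
    linarith [e1, e2, e3, hlog, habs1]
  have := le_of_mul_le_mul_right hfin hD0
  linarith
end

section
/- (Local Gärtner–Ellis theorem of Bougerol–Lacroix) For each integer n ≥ 1 let (Ωₙ, ℙₙ) be a probability space and Sₙ : Ωₙ → ℝ a random variable. Let θ₀ > 0 and let Λ : [−θ₀, θ₀] → ℝ be a continuously differentiable, strictly convex function with Λ'(0) = 0. Assume that for every θ ∈ [−θ₀, θ₀], (1/n)·log ∫_{Ωₙ} e^{θ·Sₙ} dℙₙ converges to Λ(θ) as n → ∞. Define c(ε) := sup{ θ·ε − Λ(θ) : |θ| ≤ θ₀ } for ε ∈ ℝ. Then for every ε with 0 < ε < Λ(θ₀)/θ₀, one has c(ε) > 0 and (1/n)·log ℙₙ( Sₙ > n·ε ) converges to −c(ε) as n → ∞. -/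
open MeasureTheory Filter Topology

/-- Helper: for `a > 0`, eventually `b ≤ exp (n * a)`. -/
lemma ev_exp_ge (a b : ℝ) (ha : 0 < a) :
    ∀ᶠ n : ℕ in atTop, b ≤ Real.exp ((n : ℝ) * a) := by
  have h : Tendsto (fun n : ℕ => (n : ℝ) * a) atTop atTop :=
    Tendsto.atTop_mul_const ha tendsto_natCast_atTop_atTop
  exact (Real.tendsto_exp_atTop.comp h).eventually_ge_atTop b

set_option maxHeartbeats 2000000 in
/-- Local Gärtner–Ellis theorem of Bougerol–Lacroix: if the normalized logarithmic moment
generating functions of `Sₙ` converge on `[-θ₀, θ₀]` to a `C¹` strictly convex function `Λ`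
with `Λ'(0) = 0`, then a large deviation principle holds with rate given by the Legendre
transform of `Λ`. -/
theorem stmt12 (Ω : ℕ → Type*) [∀ n, MeasurableSpace (Ω n)]
    (P : ∀ n, Measure (Ω n)) [∀ n, IsProbabilityMeasure (P n)]
    (S : ∀ n, Ω n → ℝ) (θ₀ : ℝ) (hθ₀ : 0 < θ₀) (Λ : ℝ → ℝ)
    (hΛC1 : ContDiffOn ℝ 1 Λ (Set.Icc (-θ₀) θ₀))
    (hΛconv : StrictConvexOn ℝ (Set.Icc (-θ₀) θ₀) Λ)
    (hΛ'0 : deriv Λ 0 = 0)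
    (hlim : ∀ θ ∈ Set.Icc (-θ₀) θ₀,
      Tendsto (fun n : ℕ => (1 / (n : ℝ)) * Real.log (∫ ω, Real.exp (θ * S n ω) ∂P n))
        atTop (𝓝 (Λ θ))) :
    ∀ ε : ℝ, 0 < ε → ε < Λ θ₀ / θ₀ →
      0 < sSup ((fun θ => θ * ε - Λ θ) '' Set.Icc (-θ₀) θ₀) ∧
      Tendsto (fun n : ℕ =>
          (1 / (n : ℝ)) * Real.log ((P n {ω | (n : ℝ) * ε < S n ω}).toReal))
        atTop (𝓝 (-sSup ((fun θ => θ * ε - Λ θ) '' Set.Icc (-θ₀) θ₀))) := by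
  intro ε hε hεlt
  have hII : (-θ₀) < θ₀ := by linarith
  have hmem0 : (0:ℝ) ∈ Set.Icc (-θ₀) θ₀ := ⟨by linarith, le_of_lt hθ₀⟩
  have hmem0o : (0:ℝ) ∈ Set.Ioo (-θ₀) θ₀ := ⟨by linarith, hθ₀⟩
  have hcx := hΛconv.convexOn
  -- Λ 0 = 0
  have hΛ0 : Λ 0 = 0 := by
    have h2 : Tendsto (fun n : ℕ => (1 / (n : ℝ)) *
        Real.log (∫ ω, Real.exp (0 * S n ω) ∂P n)) atTop (𝓝 (0:ℝ)) := by
      have he : ∀ n : ℕ, (1 / (n : ℝ)) * Real.log (∫ ω, Real.exp (0 * S n ω) ∂P n) = 0 := by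
        intro n
        simp
      simp only [he]
      exact tendsto_const_nhds
    exact (tendsto_nhds_unique (hlim 0 hmem0) h2)
  -- differentiability facts
  have hdiff : ∀ x ∈ Set.Ioo (-θ₀) θ₀, DifferentiableAt ℝ Λ x := fun x hx =>
    ((hΛC1.differentiableOn one_ne_zero) x (Set.Ioo_subset_Icc_self hx)).differentiableAt
      (Icc_mem_nhds hx.1 hx.2)
  have hcont : ContinuousOn Λ (Set.Icc (-θ₀) θ₀) := hΛC1.continuousOn
  have hderivCont : ContinuousOn (deriv Λ) (Set.Ioo (-θ₀) θ₀) := by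
    have h1 : ContinuousOn (derivWithin Λ (Set.Icc (-θ₀) θ₀)) (Set.Icc (-θ₀) θ₀) :=
      hΛC1.continuousOn_derivWithin (uniqueDiffOn_Icc hII) le_rfl
    exact (h1.mono Set.Ioo_subset_Icc_self).congr fun x hx =>
      (derivWithin_of_mem_nhds (Icc_mem_nhds hx.1 hx.2)).symm
  -- tangent line inequality
  have htan : ∀ x ∈ Set.Ioo (-θ₀) θ₀, ∀ y ∈ Set.Icc (-θ₀) θ₀,
      Λ x + deriv Λ x * (y - x) ≤ Λ y := by
    intro x hx y hy
    have hxI : x ∈ Set.Icc (-θ₀) θ₀ := Set.Ioo_subset_Icc_self hx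
    rcases lt_trichotomy x y with h | h | h
    · have hsl := hcx.deriv_le_slope hxI hy h (hdiff x hx)
      rw [slope_def_field] at hsl
      have h' : deriv Λ x * (y - x) ≤ Λ y - Λ x := (le_div_iff₀ (by linarith)).mp hsl
      linarith
    · subst h; simp
    · have hsl := hcx.slope_le_deriv hy hxI h (hdiff x hx)
      rw [slope_def_field] at hsl
      have h' : Λ x - Λ y ≤ deriv Λ x * (x - y) := (div_le_iff₀ (by linarith)).mp hsl
      nlinarith [h']
  -- Λ positive at positive points
  have hΛpos : ∀ t ∈ Set.Icc (-θ₀) θ₀, 0 < t → 0 < Λ t := by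
    intro t htI ht
    have h := hΛconv.deriv_lt_slope hmem0 htI ht (hdiff 0 hmem0o)
    rw [slope_def_field, hΛ'0, hΛ0, sub_zero, sub_zero] at h
    have h2 := mul_pos h ht
    rwa [div_mul_cancel₀ _ (ne_of_gt ht)] at h2
  -- MVT: find t0 with deriv Λ t0 = Λ θ₀ / θ₀ > ε
  obtain ⟨t0, ht0, hslope⟩ := exists_deriv_eq_slope Λ hθ₀
    (hcont.mono (Set.Icc_subset_Icc (by linarith) le_rfl))
    (fun x hx => (hdiff x ⟨by linarith [hx.1], hx.2⟩).differentiableWithinAt)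
  rw [hΛ0, sub_zero, sub_zero] at hslope
  -- IVT: find θs ∈ (0, t0) with deriv Λ θs = ε
  have hc0t : Set.Icc (0:ℝ) t0 ⊆ Set.Ioo (-θ₀) θ₀ := fun x hx =>
    ⟨by linarith [hx.1], lt_of_le_of_lt hx.2 ht0.2⟩
  have hεmem : ε ∈ Set.Ioo (deriv Λ 0) (deriv Λ t0) := by
    rw [hΛ'0, hslope]; exact ⟨hε, hεlt⟩
  obtain ⟨θs, hθs, hθsderiv⟩ :=
    intermediate_value_Ioo (le_of_lt ht0.1) ((hderivCont.mono hc0t)) hεmem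
  have hθsIoo : θs ∈ Set.Ioo (-θ₀) θ₀ := ⟨by linarith [hθs.1], lt_trans hθs.2 ht0.2⟩
  have hθsI : θs ∈ Set.Icc (-θ₀) θ₀ := Set.Ioo_subset_Icc_self hθsIoo
  have hθspos : 0 < θs := hθs.1
  -- sSup identification
  have hgreat : IsGreatest ((fun θ => θ * ε - Λ θ) '' Set.Icc (-θ₀) θ₀) (θs * ε - Λ θs) := by
    constructor
    · exact ⟨θs, hθsI, rfl⟩
    · rintro v ⟨θ, hθ, rfl⟩
      have h := htan θs hθsIoo θ hθ
      rw [hθsderiv] at h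
      simp only
      nlinarith [h]
  have hsup : sSup ((fun θ => θ * ε - Λ θ) '' Set.Icc (-θ₀) θ₀) = θs * ε - Λ θs :=
    hgreat.csSup_eq
  -- positivity of the rate
  have hcpos : 0 < θs * ε - Λ θs := by
    have h := hΛconv.slope_lt_deriv hmem0 hθsI hθspos (hdiff θs hθsIoo)
    rw [slope_def_field, hθsderiv, hΛ0, sub_zero, sub_zero] at h
    have h2 := (div_lt_iff₀ hθspos).mp h
    nlinarith [h2]
  -- eventual integrability and two-sided bounds on the MGF
  have haux : ∀ θ, θ ∈ Set.Icc (-θ₀) θ₀ → 0 < Λ θ → ∀ γ : ℝ, 0 < γ →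
      ∀ᶠ n : ℕ in atTop,
        Integrable (fun ω => Real.exp (θ * S n ω)) (P n) ∧
        Real.exp ((n : ℝ) * (Λ θ - γ)) ≤ (∫ ω, Real.exp (θ * S n ω) ∂P n) ∧
        (∫ ω, Real.exp (θ * S n ω) ∂P n) ≤ Real.exp ((n : ℝ) * (Λ θ + γ)) := by
    intro θ hθ hpos γ hγ
    have hγ' : 0 < min γ (Λ θ) := lt_min hγ hpos
    have h2 : ∀ᶠ n : ℕ in atTop,
        |(1 / (n : ℝ)) * Real.log (∫ ω, Real.exp (θ * S n ω) ∂P n) - Λ θ| < min γ (Λ θ) :=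
      (hlim θ hθ).eventually (eventually_abs_sub_lt _ hγ')
    filter_upwards [h2, eventually_ge_atTop 1] with n hn hn1
    have hnR : (1:ℝ) ≤ (n:ℝ) := by exact_mod_cast hn1
    have hnpos : (0:ℝ) < n := by linarith
    have habs := abs_lt.mp hn
    have hlo : Λ θ - min γ (Λ θ) < (1/(n:ℝ)) * Real.log (∫ ω, Real.exp (θ * S n ω) ∂P n) := by
      linarith [habs.1]
    have hhi : (1/(n:ℝ)) * Real.log (∫ ω, Real.exp (θ * S n ω) ∂P n) < Λ θ + min γ (Λ θ) := by
      linarith [habs.2]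
    have hLpos : 0 < (1/(n:ℝ)) * Real.log (∫ ω, Real.exp (θ * S n ω) ∂P n) :=
      lt_of_le_of_lt (by linarith [min_le_right γ (Λ θ)]) hlo
    have hlogpos : 0 < Real.log (∫ ω, Real.exp (θ * S n ω) ∂P n) := by
      by_contra h
      push_neg at h
      have : (1/(n:ℝ)) * Real.log (∫ ω, Real.exp (θ * S n ω) ∂P n) ≤ 0 :=
        mul_nonpos_of_nonneg_of_nonpos (by positivity) h
      linarith
    have hZne : (∫ ω, Real.exp (θ * S n ω) ∂P n) ≠ 0 := by
      intro h; rw [h, Real.log_zero] at hlogpos; exact lt_irrefl 0 hlogpos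
    have hint : Integrable (fun ω => Real.exp (θ * S n ω)) (P n) := by
      by_contra h
      exact hZne (integral_undef h)
    have hZpos : 0 < (∫ ω, Real.exp (θ * S n ω) ∂P n) :=
      lt_of_le_of_ne (integral_nonneg fun ω => (Real.exp_pos _).le) (Ne.symm hZne)
    have hmuln : (n:ℝ) * ((1/(n:ℝ)) * Real.log (∫ ω, Real.exp (θ * S n ω) ∂P n))
        = Real.log (∫ ω, Real.exp (θ * S n ω) ∂P n) := by
      field_simp
    refine ⟨hint, ?_, ?_⟩
    · have h4 : Λ θ - γ ≤ (1/(n:ℝ)) * Real.log (∫ ω, Real.exp (θ * S n ω) ∂P n) := by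
        have := min_le_left γ (Λ θ); linarith
      have h3 : (n:ℝ) * (Λ θ - γ) ≤ Real.log (∫ ω, Real.exp (θ * S n ω) ∂P n) := by
        have := mul_le_mul_of_nonneg_left h4 (le_of_lt hnpos)
        rwa [hmuln] at this
      calc Real.exp ((n:ℝ) * (Λ θ - γ)) ≤ Real.exp (Real.log (∫ ω, Real.exp (θ * S n ω) ∂P n)) :=
            Real.exp_le_exp.mpr h3
        _ = _ := Real.exp_log hZpos
    · have h4 : (1/(n:ℝ)) * Real.log (∫ ω, Real.exp (θ * S n ω) ∂P n) ≤ Λ θ + γ := by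
        have := min_le_left γ (Λ θ); linarith
      have h3 : Real.log (∫ ω, Real.exp (θ * S n ω) ∂P n) ≤ (n:ℝ) * (Λ θ + γ) := by
        have := mul_le_mul_of_nonneg_left h4 (le_of_lt hnpos)
        rwa [hmuln] at this
      calc (∫ ω, Real.exp (θ * S n ω) ∂P n)
          = Real.exp (Real.log (∫ ω, Real.exp (θ * S n ω) ∂P n)) := (Real.exp_log hZpos).symm
        _ ≤ Real.exp ((n:ℝ) * (Λ θ + γ)) := Real.exp_le_exp.mpr h3
  have hΛθspos : 0 < Λ θs := hΛpos θs hθsI hθspos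
  -- upper bound (Chernoff)
  have hupper : ∀ δ : ℝ, 0 < δ → ∀ᶠ n : ℕ in atTop,
      (P n {ω | (n:ℝ) * ε < S n ω}).toReal ≤ Real.exp ((n:ℝ) * (-(θs*ε - Λ θs) + δ)) := by
    intro δ hδ
    filter_upwards [haux θs hθsI hΛθspos δ hδ] with n hn
    obtain ⟨hint, -, hZhi⟩ := hn
    have hMarkov := mul_meas_ge_le_integral_of_nonneg
      (Eventually.of_forall fun ω => (Real.exp_pos (θs * S n ω)).le) hint
      (Real.exp (θs * ((n:ℝ)*ε)))
    have hsub : {ω | (n:ℝ)*ε < S n ω} ⊆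
        {ω | Real.exp (θs * ((n:ℝ)*ε)) ≤ Real.exp (θs * S n ω)} := fun ω hω =>
      Real.exp_le_exp.mpr (mul_le_mul_of_nonneg_left (le_of_lt hω) (le_of_lt hθspos))
    have hmono : (P n {ω | (n:ℝ)*ε < S n ω}).toReal ≤
        (P n {ω | Real.exp (θs*((n:ℝ)*ε)) ≤ Real.exp (θs * S n ω)}).toReal :=
      ENNReal.toReal_mono (measure_ne_top _ _) (measure_mono hsub)
    have hexp : (0:ℝ) < Real.exp (θs * ((n:ℝ)*ε)) := Real.exp_pos _
    have h1 : Real.exp (θs*((n:ℝ)*ε)) *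
        (P n {ω | Real.exp (θs*((n:ℝ)*ε)) ≤ Real.exp (θs * S n ω)}).toReal
        ≤ Real.exp ((n:ℝ)*(Λ θs + δ)) := le_trans hMarkov hZhi
    have h2 : (P n {ω | Real.exp (θs*((n:ℝ)*ε)) ≤ Real.exp (θs * S n ω)}).toReal
        ≤ Real.exp ((n:ℝ)*(Λ θs + δ) - θs * ((n:ℝ)*ε)) := by
      rw [Real.exp_sub]
      exact (le_div_iff₀ hexp).mpr (by rw [mul_comm]; exact h1)
    have harg : (n:ℝ)*(Λ θs + δ) - θs*((n:ℝ)*ε) = (n:ℝ)*(-(θs*ε - Λ θs) + δ) := by ring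
    rw [harg] at h2
    exact le_trans hmono h2
  -- lower bound (tilting)
  have hlower : ∀ δ : ℝ, 0 < δ → ∀ᶠ n : ℕ in atTop,
      Real.exp ((n:ℝ) * (-(θs*ε - Λ θs) - δ)) ≤ (P n {ω | (n:ℝ)*ε < S n ω}).toReal := by
    intro δ hδ
    -- choose θ' slightly above θs
    have hgcont : ContinuousAt (fun t => Λ t - t * deriv Λ t) θs := by
      have h1 : ContinuousAt Λ θs := hcont.continuousAt (Icc_mem_nhds hθsIoo.1 hθsIoo.2)
      have h2 : ContinuousAt (deriv Λ) θs := hderivCont.continuousAt (isOpen_Ioo.mem_nhds hθsIoo)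
      exact h1.sub (continuousAt_id.mul h2)
    have hevθ' : ∀ᶠ t in 𝓝[>] θs,
        |(Λ t - t * deriv Λ t) - (Λ θs - θs * deriv Λ θs)| < δ/4 ∧ t < θ₀ ∧ θs < t := by
      refine Eventually.and ?_ (Eventually.and ?_ ?_)
      · exact (hgcont.tendsto.eventually
          (eventually_abs_sub_lt _ (by positivity : (0:ℝ) < δ/4))).filter_mono nhdsWithin_le_nhds
      · exact (eventually_lt_nhds hθsIoo.2).filter_mono nhdsWithin_le_nhds
      · exact eventually_mem_nhdsWithin
    obtain ⟨θ', hθ'g, hθ'lt, hθ'gt⟩ := hevθ'.exists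
    rw [hθsderiv] at hθ'g
    have hθ'pos : 0 < θ' := lt_trans hθspos hθ'gt
    have hθ'Ioo : θ' ∈ Set.Ioo (-θ₀) θ₀ := ⟨by linarith, hθ'lt⟩
    have hθ'I : θ' ∈ Set.Icc (-θ₀) θ₀ := Set.Ioo_subset_Icc_self hθ'Ioo
    have hsm : StrictMonoOn (deriv Λ) (Set.Ioo (-θ₀) θ₀) :=
      (hΛconv.subset Set.Ioo_subset_Icc_self (convex_Ioo _ _)).strictMonoOn_deriv
        (fun x hx => hdiff x hx)
    have hηε : ε < deriv Λ θ' := by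
      have := hsm hθsIoo hθ'Ioo hθ'gt
      rwa [hθsderiv] at this
    have hδ'pos : 0 < δ / (4*θ₀) := by positivity
    -- choose s small
    have hd2 : ContinuousAt (deriv Λ) θ' := hderivCont.continuousAt (isOpen_Ioo.mem_nhds hθ'Ioo)
    have hplus : Tendsto (fun s : ℝ => deriv Λ (θ' + s)) (𝓝 0) (𝓝 (deriv Λ θ')) := by
      have h : Tendsto (fun s : ℝ => θ' + s) (𝓝 0) (𝓝 θ') := by
        simpa using (tendsto_id (α := ℝ) (x := 𝓝 0)).const_add θ'
      exact hd2.tendsto.comp h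
    have hminus : Tendsto (fun s : ℝ => deriv Λ (θ' - s)) (𝓝 0) (𝓝 (deriv Λ θ')) := by
      have h : Tendsto (fun s : ℝ => θ' - s) (𝓝 0) (𝓝 θ') := by
        simpa using (tendsto_id (α := ℝ) (x := 𝓝 0)).const_sub θ'
      exact hd2.tendsto.comp h
    have hevs : ∀ᶠ s in 𝓝[>] (0:ℝ),
        (deriv Λ (θ' + s) < deriv Λ θ' + δ/(4*θ₀)) ∧ (ε < deriv Λ (θ' - s)) ∧
        s < θ₀ - θ' ∧ s < θ' ∧ 0 < s := by
      refine Eventually.and ?_ (Eventually.and ?_ (Eventually.and ?_ (Eventually.and ?_ ?_)))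
      · exact (hplus.eventually_lt_const
          (lt_add_of_pos_right _ hδ'pos)).filter_mono nhdsWithin_le_nhds
      · exact (hminus.eventually_const_lt hηε).filter_mono nhdsWithin_le_nhds
      · exact (eventually_lt_nhds (by linarith : (0:ℝ) < θ₀ - θ')).filter_mono nhdsWithin_le_nhds
      · exact (eventually_lt_nhds hθ'pos).filter_mono nhdsWithin_le_nhds
      · exact eventually_mem_nhdsWithin
    obtain ⟨s, hs1, hs2, hs3, hs4, hs5⟩ := hevs.exists
    have hmIoo : θ' - s ∈ Set.Ioo (-θ₀) θ₀ := ⟨by linarith, by linarith⟩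
    have hpIoo : θ' + s ∈ Set.Ioo (-θ₀) θ₀ := ⟨by linarith, by linarith⟩
    have hmI : θ' - s ∈ Set.Icc (-θ₀) θ₀ := Set.Ioo_subset_Icc_self hmIoo
    have hpI : θ' + s ∈ Set.Icc (-θ₀) θ₀ := Set.Ioo_subset_Icc_self hpIoo
    have hεM : ε < deriv Λ θ' + δ/(4*θ₀) := lt_trans hηε (lt_add_of_pos_right _ hδ'pos)
    -- B1, B2 inequalities
    have hB2 : Λ (θ' + s) - Λ θ' < s * (deriv Λ θ' + δ/(4*θ₀)) := by
      have h := hcx.slope_le_deriv hθ'I hpI (by linarith) (hdiff (θ'+s) hpIoo)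
      rw [slope_def_field] at h
      have harg : θ' + s - θ' = s := by ring
      rw [harg] at h
      have h9 := (div_lt_iff₀ hs5).mp (lt_of_le_of_lt h hs1)
      nlinarith [h9]
    have hB1 : s * ε < Λ θ' - Λ (θ' - s) := by
      have h := hcx.deriv_le_slope hmI hθ'I (by linarith) (hdiff (θ'-s) hmIoo)
      rw [slope_def_field] at h
      have harg : θ' - (θ' - s) = s := by ring
      rw [harg] at h
      have h9 := (lt_div_iff₀ hs5).mp (lt_of_lt_of_le hs2 h)
      nlinarith [h9]
    have hLpos : 0 < Λ θ' := hΛpos θ' hθ'I hθ'pos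
    have hLm : 0 < Λ (θ' - s) := hΛpos _ hmI (by linarith)
    have hLp : 0 < Λ (θ' + s) := hΛpos _ hpI (by linarith)
    set κ := min (Λ θ' - (s*ε + Λ (θ'-s)))
      (Λ θ' - (-(s * (deriv Λ θ' + δ/(4*θ₀))) + Λ (θ'+s))) with hκdef
    have hκpos : 0 < κ := lt_min (by linarith) (by linarith)
    set γ := min (δ/8) (κ/4) with hγdef
    have hγpos : 0 < γ := lt_min (by positivity) (by positivity)
    have hγδ : γ ≤ δ/8 := min_le_left _ _
    have hγκ : γ ≤ κ/4 := min_le_right _ _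
    have hκ1 : s*ε + Λ (θ'-s) ≤ Λ θ' - κ := by
      have := min_le_left (Λ θ' - (s*ε + Λ (θ'-s)))
        (Λ θ' - (-(s * (deriv Λ θ' + δ/(4*θ₀))) + Λ (θ'+s)))
      rw [← hκdef] at this
      linarith
    have hκ2 : -(s * (deriv Λ θ' + δ/(4*θ₀))) + Λ (θ'+s) ≤ Λ θ' - κ := by
      have := min_le_right (Λ θ' - (s*ε + Λ (θ'-s)))
        (Λ θ' - (-(s * (deriv Λ θ' + δ/(4*θ₀))) + Λ (θ'+s)))
      rw [← hκdef] at this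
      linarith
    filter_upwards [haux θ' hθ'I hLpos γ hγpos, haux (θ'-s) hmI hLm γ hγpos,
      haux (θ'+s) hpI hLp γ hγpos, eventually_ge_atTop 1,
      ev_exp_ge (2*γ) 4 (by positivity), ev_exp_ge (δ/4) 2 (by positivity)]
      with n h1 h2 h3 hn1 h5 h6
    obtain ⟨hint1, hZlo1, -⟩ := h1
    obtain ⟨hint2, -, hZhi2⟩ := h2
    obtain ⟨hint3, -, hZhi3⟩ := h3
    have hnR : (1:ℝ) ≤ (n:ℝ) := by exact_mod_cast hn1
    have hnpos : (0:ℝ) < n := by linarith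
    -- a.e. measurable modification
    have hSae : AEMeasurable (S n) (P n) := by
      have h := hint1.aemeasurable
      have heq : (fun ω => Real.log (Real.exp (θ' * S n ω)) / θ') = S n := by
        funext ω; rw [Real.log_exp]; field_simp
      rw [← heq]
      exact (Real.measurable_log.comp_aemeasurable h).div_const θ'
    set g := hSae.mk (S n) with hgdef
    have hgm : Measurable g := hSae.measurable_mk
    have hgae : S n =ᵐ[P n] g := hSae.ae_eq_mk
    have hcong : ∀ θ : ℝ, (∫ ω, Real.exp (θ * S n ω) ∂P n) = ∫ ω, Real.exp (θ * g ω) ∂P n :=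
      fun θ => integral_congr_ae (hgae.mono fun ω hω => by simp only [hω])
    have hint1' : Integrable (fun ω => Real.exp (θ' * g ω)) (P n) :=
      hint1.congr (hgae.mono fun ω hω => by simp only [hω])
    have hint2' : Integrable (fun ω => Real.exp ((θ'-s) * g ω)) (P n) :=
      hint2.congr (hgae.mono fun ω hω => by simp only [hω])
    have hint3' : Integrable (fun ω => Real.exp ((θ'+s) * g ω)) (P n) :=
      hint3.congr (hgae.mono fun ω hω => by simp only [hω])
    rw [hcong θ'] at hZlo1
    rw [hcong (θ'-s)] at hZhi2
    rw [hcong (θ'+s)] at hZhi3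
    -- sets
    set M : ℝ := deriv Λ θ' + δ/(4*θ₀) with hMdef
    set A2 : Set (Ω n) := {x | (n:ℝ)*ε < g x ∧ g x < (n:ℝ)*M} with hA2def
    set A1 : Set (Ω n) := {x | g x ≤ (n:ℝ)*ε} with hA1def
    set A3 : Set (Ω n) := {x | (n:ℝ)*M ≤ g x} with hA3def
    have hA2m : MeasurableSet A2 :=
      (measurableSet_lt measurable_const hgm).inter (measurableSet_lt hgm measurable_const)
    have hA3m : MeasurableSet A3 := measurableSet_le measurable_const hgm
    have hcompl : A2ᶜ = A1 ∪ A3 := by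
      ext x
      simp only [hA2def, hA1def, hA3def, Set.mem_compl_iff, Set.mem_setOf_eq, Set.mem_union,
        not_and_or, not_lt]
    have hεM' : (n:ℝ)*ε < (n:ℝ)*M := mul_lt_mul_of_pos_left hεM hnpos
    have hdisj : Disjoint A1 A3 := by
      rw [Set.disjoint_left]
      intro x hx1 hx3
      simp only [hA1def, hA3def, Set.mem_setOf_eq] at hx1 hx3
      linarith
    have hsplit := integral_add_compl hA2m hint1'
    rw [hcompl] at hsplit
    have hunion : (∫ x in A1 ∪ A3, Real.exp (θ' * g x) ∂P n)
        = (∫ x in A1, Real.exp (θ' * g x) ∂P n) + ∫ x in A3, Real.exp (θ' * g x) ∂P n :=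
      setIntegral_union hdisj hA3m hint1'.integrableOn hint1'.integrableOn
    rw [hunion] at hsplit
    -- bound on A1
    have hA1bound : (∫ x in A1, Real.exp (θ' * g x) ∂P n)
        ≤ Real.exp ((n:ℝ)*(Λ θ' - γ)) * (1/4) := by
      have step1 : (∫ x in A1, Real.exp (θ' * g x) ∂P n)
          ≤ ∫ x in A1, Real.exp (s*((n:ℝ)*ε)) * Real.exp ((θ'-s) * g x) ∂P n := by
        apply setIntegral_mono_on hint1'.integrableOn ((hint2'.const_mul _).integrableOn)
          (measurableSet_le hgm measurable_const)
        intro x hx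
        rw [← Real.exp_add]
        apply Real.exp_le_exp.mpr
        have hx' : g x ≤ (n:ℝ)*ε := hx
        linarith [mul_le_mul_of_nonneg_left hx' hs5.le]
      have step2 : (∫ x in A1, Real.exp (s*((n:ℝ)*ε)) * Real.exp ((θ'-s)*g x) ∂P n)
          ≤ ∫ ω, Real.exp (s*((n:ℝ)*ε)) * Real.exp ((θ'-s)*g ω) ∂P n :=
        setIntegral_le_integral (hint2'.const_mul _)
          (Eventually.of_forall fun ω => by positivity)
      have step5 : Real.exp (-((n:ℝ)*(2*γ))) ≤ 1/4 := by
        rw [Real.exp_neg]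
        rw [show (1:ℝ)/4 = 4⁻¹ by norm_num]
        exact inv_anti₀ (by norm_num) h5
      calc (∫ x in A1, Real.exp (θ' * g x) ∂P n)
          ≤ ∫ x in A1, Real.exp (s*((n:ℝ)*ε)) * Real.exp ((θ'-s) * g x) ∂P n := step1
        _ ≤ ∫ ω, Real.exp (s*((n:ℝ)*ε)) * Real.exp ((θ'-s)*g ω) ∂P n := step2
        _ = Real.exp (s*((n:ℝ)*ε)) * ∫ ω, Real.exp ((θ'-s)*g ω) ∂P n :=
            integral_const_mul _ _
        _ ≤ Real.exp (s*((n:ℝ)*ε)) * Real.exp ((n:ℝ)*(Λ (θ'-s) + γ)) :=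
            mul_le_mul_of_nonneg_left hZhi2 (Real.exp_pos _).le
        _ = Real.exp (s*((n:ℝ)*ε) + (n:ℝ)*(Λ (θ'-s) + γ)) := (Real.exp_add _ _).symm
        _ ≤ Real.exp ((n:ℝ)*(Λ θ' - γ)) * Real.exp (-((n:ℝ)*(2*γ))) := by
            rw [← Real.exp_add]
            apply Real.exp_le_exp.mpr
            have hlin : s*ε + Λ (θ'-s) + γ ≤ (Λ θ' - γ) - 2*γ := by
              have h4γ : 4*γ ≤ κ := by linarith
              linarith
            linarith [mul_le_mul_of_nonneg_left hlin hnpos.le]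
        _ ≤ Real.exp ((n:ℝ)*(Λ θ' - γ)) * (1/4) :=
            mul_le_mul_of_nonneg_left step5 (Real.exp_pos _).le
    -- bound on A3
    have hA3bound : (∫ x in A3, Real.exp (θ' * g x) ∂P n)
        ≤ Real.exp ((n:ℝ)*(Λ θ' - γ)) * (1/4) := by
      have step1 : (∫ x in A3, Real.exp (θ' * g x) ∂P n)
          ≤ ∫ x in A3, Real.exp (-(s*((n:ℝ)*M))) * Real.exp ((θ'+s) * g x) ∂P n := by
        apply setIntegral_mono_on hint1'.integrableOn ((hint3'.const_mul _).integrableOn)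
          (measurableSet_le measurable_const hgm)
        intro x hx
        rw [← Real.exp_add]
        apply Real.exp_le_exp.mpr
        have hx' : (n:ℝ)*M ≤ g x := hx
        linarith [mul_le_mul_of_nonneg_left hx' hs5.le]
      have step2 : (∫ x in A3, Real.exp (-(s*((n:ℝ)*M))) * Real.exp ((θ'+s)*g x) ∂P n)
          ≤ ∫ ω, Real.exp (-(s*((n:ℝ)*M))) * Real.exp ((θ'+s)*g ω) ∂P n :=
        setIntegral_le_integral (hint3'.const_mul _)
          (Eventually.of_forall fun ω => by positivity)
      have step5 : Real.exp (-((n:ℝ)*(2*γ))) ≤ 1/4 := by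
        rw [Real.exp_neg]
        rw [show (1:ℝ)/4 = 4⁻¹ by norm_num]
        exact inv_anti₀ (by norm_num) h5
      calc (∫ x in A3, Real.exp (θ' * g x) ∂P n)
          ≤ ∫ x in A3, Real.exp (-(s*((n:ℝ)*M))) * Real.exp ((θ'+s) * g x) ∂P n := step1
        _ ≤ ∫ ω, Real.exp (-(s*((n:ℝ)*M))) * Real.exp ((θ'+s)*g ω) ∂P n := step2
        _ = Real.exp (-(s*((n:ℝ)*M))) * ∫ ω, Real.exp ((θ'+s)*g ω) ∂P n :=
            integral_const_mul _ _
        _ ≤ Real.exp (-(s*((n:ℝ)*M))) * Real.exp ((n:ℝ)*(Λ (θ'+s) + γ)) :=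
            mul_le_mul_of_nonneg_left hZhi3 (Real.exp_pos _).le
        _ = Real.exp (-(s*((n:ℝ)*M)) + (n:ℝ)*(Λ (θ'+s) + γ)) := (Real.exp_add _ _).symm
        _ ≤ Real.exp ((n:ℝ)*(Λ θ' - γ)) * Real.exp (-((n:ℝ)*(2*γ))) := by
            rw [← Real.exp_add]
            apply Real.exp_le_exp.mpr
            have hlin : -(s*M) + Λ (θ'+s) + γ ≤ (Λ θ' - γ) - 2*γ := by
              have h4γ : 4*γ ≤ κ := by linarith
              linarith [hκ2]
            linarith [mul_le_mul_of_nonneg_left hlin hnpos.le]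
        _ ≤ Real.exp ((n:ℝ)*(Λ θ' - γ)) * (1/4) :=
            mul_le_mul_of_nonneg_left step5 (Real.exp_pos _).le
    -- middle integral is large
    have hmid : Real.exp ((n:ℝ)*(Λ θ' - γ)) / 2 ≤ ∫ x in A2, Real.exp (θ' * g x) ∂P n := by
      have := hZlo1
      linarith [hsplit, hA1bound, hA3bound, hZlo1]
    -- middle integral bounded by constant times measure
    have hA2const : (∫ x in A2, Real.exp (θ' * g x) ∂P n)
        ≤ (P n A2).toReal * Real.exp (θ' * ((n:ℝ)*M)) := by
      have h := setIntegral_mono_on hint1'.integrableOn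
        (integrableOn_const (measure_ne_top _ _)) hA2m
        (fun x hx => Real.exp_le_exp.mpr (mul_le_mul_of_nonneg_left hx.2.le hθ'pos.le))
      rwa [setIntegral_const, smul_eq_mul] at h
    have hPA2 : Real.exp ((n:ℝ)*(Λ θ' - γ) - θ' * ((n:ℝ)*M)) / 2 ≤ (P n A2).toReal := by
      have hepos : (0:ℝ) < Real.exp (θ' * ((n:ℝ)*M)) := Real.exp_pos _
      have h7 : Real.exp ((n:ℝ)*(Λ θ' - γ))/2 ≤ (P n A2).toReal * Real.exp (θ'*((n:ℝ)*M)) :=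
        le_trans hmid hA2const
      have heq : Real.exp ((n:ℝ)*(Λ θ' - γ) - θ'*((n:ℝ)*M))/2
          = (Real.exp ((n:ℝ)*(Λ θ' - γ))/2) / Real.exp (θ'*((n:ℝ)*M)) := by
        rw [Real.exp_sub]; ring
      rw [heq]
      exact (div_le_iff₀ hepos).mpr h7
    -- relate to the original measure
    have hseteq : P n {ω | (n:ℝ)*ε < S n ω} = P n {ω | (n:ℝ)*ε < g ω} := by
      apply measure_congr
      filter_upwards [hgae] with ω hω
      show ((n:ℝ)*ε < S n ω) = ((n:ℝ)*ε < g ω)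
      rw [hω]
    have hsubset : A2 ⊆ {ω | (n:ℝ)*ε < g ω} := fun x hx => hx.1
    have hfinal1 : (P n A2).toReal ≤ (P n {ω | (n:ℝ)*ε < S n ω}).toReal := by
      rw [hseteq]
      exact ENNReal.toReal_mono (measure_ne_top _ _) (measure_mono hsubset)
    -- final numeric step
    have hθ'δ' : θ' * (δ/(4*θ₀)) ≤ δ/4 := by
      have h1 : θ' * (δ/(4*θ₀)) ≤ θ₀ * (δ/(4*θ₀)) :=
        mul_le_mul_of_nonneg_right hθ'lt.le hδ'pos.le
      have h2 : θ₀ * (δ/(4*θ₀)) = δ/4 := by field_simp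
      linarith
    have habs2 := (abs_lt.mp hθ'g).1
    have hgap : -(θs*ε - Λ θs) - 3*(δ/4) ≤ (Λ θ' - γ) - θ'*M := by
      have hexpand : θ' * M = θ' * deriv Λ θ' + θ' * (δ/(4*θ₀)) := by
        rw [hMdef]; ring
      rw [hexpand]
      linarith
    have hexp1 : Real.exp ((n:ℝ)*(-(θs*ε - Λ θs) - δ))
        ≤ Real.exp ((n:ℝ)*(Λ θ' - γ) - θ'*((n:ℝ)*M)) / 2 := by
      rw [le_div_iff₀ (by norm_num : (0:ℝ) < 2)]
      have e1 : Real.exp ((n:ℝ)*(-(θs*ε - Λ θs) - δ)) * 2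
          ≤ Real.exp ((n:ℝ)*(-(θs*ε - Λ θs) - δ)) * Real.exp ((n:ℝ)*(δ/4)) :=
        mul_le_mul_of_nonneg_left h6 (Real.exp_pos _).le
      rw [← Real.exp_add] at e1
      have e2 : Real.exp ((n:ℝ)*(-(θs*ε - Λ θs) - δ) + (n:ℝ)*(δ/4))
          ≤ Real.exp ((n:ℝ)*(Λ θ' - γ) - θ'*((n:ℝ)*M)) := by
        apply Real.exp_le_exp.mpr
        have h8 : -(θs*ε - Λ θs) - δ + δ/4 ≤ (Λ θ' - γ) - θ'*M := by linarith
        linarith [mul_le_mul_of_nonneg_left h8 hnpos.le]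
      exact le_trans e1 e2
    linarith [hexp1, hPA2, hfinal1]
  -- assemble
  refine ⟨by rw [hsup]; exact hcpos, ?_⟩
  rw [hsup]
  rw [Metric.tendsto_atTop]
  intro r hr
  obtain ⟨N1, h1⟩ := eventually_atTop.mp (hupper (r/2) (by positivity))
  obtain ⟨N2, h2⟩ := eventually_atTop.mp (hlower (r/2) (by positivity))
  refine ⟨max (max N1 N2) 1, fun n hn => ?_⟩
  have hn1 : 1 ≤ n := le_trans (le_max_right _ _) hn
  have hnN1 : N1 ≤ n := le_trans (le_trans (le_max_left _ _) (le_max_left _ _)) hn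
  have hnN2 : N2 ≤ n := le_trans (le_trans (le_max_right _ _) (le_max_left _ _)) hn
  have hnR : (1:ℝ) ≤ (n:ℝ) := by exact_mod_cast hn1
  have hnpos : (0:ℝ) < n := by linarith
  have hPup := h1 n hnN1
  have hPlo := h2 n hnN2
  have hPpos : 0 < (P n {ω | (n:ℝ)*ε < S n ω}).toReal :=
    lt_of_lt_of_le (Real.exp_pos _) hPlo
  have hlog1 : (n:ℝ)*(-(θs*ε - Λ θs) - r/2)
      ≤ Real.log ((P n {ω | (n:ℝ)*ε < S n ω}).toReal) := by
    calc (n:ℝ)*(-(θs*ε - Λ θs) - r/2)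
        = Real.log (Real.exp ((n:ℝ)*(-(θs*ε - Λ θs) - r/2))) := (Real.log_exp _).symm
      _ ≤ _ := Real.log_le_log (Real.exp_pos _) hPlo
  have hlog2 : Real.log ((P n {ω | (n:ℝ)*ε < S n ω}).toReal)
      ≤ (n:ℝ)*(-(θs*ε - Λ θs) + r/2) := by
    calc Real.log ((P n {ω | (n:ℝ)*ε < S n ω}).toReal)
        ≤ Real.log (Real.exp ((n:ℝ)*(-(θs*ε - Λ θs) + r/2))) := Real.log_le_log hPpos hPup
      _ = _ := Real.log_exp _
  have hninv : (0:ℝ) < 1/(n:ℝ) := by positivity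
  have e1 : (1/(n:ℝ)) * ((n:ℝ)*(-(θs*ε - Λ θs) - r/2)) = -(θs*ε - Λ θs) - r/2 := by
    field_simp
  have e2 : (1/(n:ℝ)) * ((n:ℝ)*(-(θs*ε - Λ θs) + r/2)) = -(θs*ε - Λ θs) + r/2 := by
    field_simp
  have h3 := mul_le_mul_of_nonneg_left hlog1 hninv.le
  have h4 := mul_le_mul_of_nonneg_left hlog2 hninv.le
  rw [e1] at h3
  rw [e2] at h4
  rw [Real.dist_eq, abs_lt]
  constructor <;> [skip; skip] <;> linarith
end
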